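/- Minimization of the marginal objective over spiked precision matrices (Tipping–Bishop step used in the proof of Theorem 1): Let S_X ∈ ℝ^{p×p} be symmetric positive semi-definite with rank greater than k, with eigenvalues λ₁ ≥ ⋯ ≥ λ_p ≥ 0 and corresponding orthonormal eigenvectors v₁,…,v_p. Let Θ_X be the set of symmetric positive definite Ω_X ∈ ℝ^{p×p} such that Ω_X⁻¹ = τ(I_p + UDUᵀ) for some semi-orthogonal U ∈ ℝ^{p×k}, diagonal positive semi-definite D ∈ ℝ^{k×k}, and τ > 0. Then g_{n,2}(Ω_X) = −log det Ω_X + tr(S_X Ω_X) is minimized over Θ_X at Ω̂_X whose inverse Σ̂_X has eigenvectors v₁,…,v_p with corresponding eigenvalues λ₁,…,λ_k, τ̂,…,τ̂, where τ̂ = Σ_{j=k+1}^p λ_j/(p − k); that is, for every Ω_X ∈ Θ_X, g_{n,2}(Ω_X) ≥ Σ_{j=1}^k [log λ_j + 1] + (p − k)[log τ̂ + 1]. -/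

import Mathlib

open Matrix
open scoped BigOperators

noncomputable section

/-- The set Θ_X of spiked precision matrices: symmetric positive definite `Ω_X ∈ ℝ^{p×p}`
with `Ω_X⁻¹ = τ(I_p + U D Uᵀ)` for a semi-orthogonal `U ∈ ℝ^{p×k}`, a diagonal positive
semi-definite `D` and `τ > 0`. -/
def ThetaX (p k : ℕ) : Set (Matrix (Fin p) (Fin p) ℝ) :=
  {ΩX | ΩX.PosDef ∧
    ∃ (U : Matrix (Fin p) (Fin k) ℝ) (D : Matrix (Fin k) (Fin k) ℝ) (τ : ℝ),
      Uᵀ * U = 1 ∧ D.IsDiag ∧ (∀ i, 0 ≤ D i i) ∧ 0 < τ ∧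
      ΩX⁻¹ = τ • (1 + U * D * Uᵀ)}

/-- The marginal objective `g_{n,2}(Ω_X) = −log det Ω_X + tr(S_X Ω_X)`. -/
noncomputable def gMarg {p : ℕ} (SX ΩX : Matrix (Fin p) (Fin p) ℝ) : ℝ :=
  -Real.log ΩX.det + (SX * ΩX).trace



section Helpers
open Finset

lemma log_key {a x : ℝ} (ha : 0 < a) (hx : 0 < x) :
    Real.log a + 1 ≤ Real.log x + a / x := by
  have h := Real.log_le_sub_one_of_pos (x := a / x) (by positivity)
  have : Real.log (a / x) = Real.log a - Real.log x := Real.log_div ha.ne' hx.ne'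
  linarith [this ▸ h]

lemma abel_key (b s l : ℕ → ℝ) (k : ℕ)
    (hb0 : ∀ i, 0 ≤ b i) (hbmono : ∀ i j, i ≤ j → b j ≤ b i)
    (hdom : ∀ m, m ≤ k → ∑ i ∈ range m, s i ≤ ∑ i ∈ range m, l i) :
    ∑ i ∈ range k, b i * s i ≤ ∑ i ∈ range k, b i * l i := by
  have main : ∀ m, m ≤ k →
      ∑ i ∈ range m, b i * (s i - l i) ≤ b m * (∑ i ∈ range m, s i - ∑ i ∈ range m, l i) := by
    intro m
    induction m with
    | zero => intro _; simp
    | succ n ih =>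
      intro hnk
      have hn : n ≤ k := Nat.le_of_succ_le hnk
      have h1 := ih hn
      have hdn : ∑ i ∈ range n, s i - ∑ i ∈ range n, l i ≤ 0 := by
        have := hdom n hn; linarith
      have h2 : b n * (∑ i ∈ range n, s i - ∑ i ∈ range n, l i) ≤
          b n * (∑ i ∈ range n, s i - ∑ i ∈ range n, l i) := le_refl _
      have hstep : b n * (∑ i ∈ range n, s i - ∑ i ∈ range n, l i) + b n * (s n - l n)
          = b n * (∑ i ∈ range (n+1), s i - ∑ i ∈ range (n+1), l i) := by
        rw [Finset.sum_range_succ, Finset.sum_range_succ]; ring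
      have hlast : b n * (∑ i ∈ range (n+1), s i - ∑ i ∈ range (n+1), l i) ≤
          b (n+1) * (∑ i ∈ range (n+1), s i - ∑ i ∈ range (n+1), l i) := by
        have hd : ∑ i ∈ range (n+1), s i - ∑ i ∈ range (n+1), l i ≤ 0 := by
          have := hdom (n+1) hnk; linarith
        exact mul_le_mul_of_nonpos_right (hbmono n (n+1) (Nat.le_succ n)) hd
      calc ∑ i ∈ range (n+1), b i * (s i - l i)
          = ∑ i ∈ range n, b i * (s i - l i) + b n * (s n - l n) := Finset.sum_range_succ _ n
        _ ≤ b n * (∑ i ∈ range n, s i - ∑ i ∈ range n, l i) + b n * (s n - l n) := by linarith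
        _ = b n * (∑ i ∈ range (n+1), s i - ∑ i ∈ range (n+1), l i) := hstep
        _ ≤ _ := hlast
  have := main k le_rfl
  have hk0 : b k * (∑ i ∈ range k, s i - ∑ i ∈ range k, l i) ≤ 0 := by
    have hd := hdom k le_rfl
    exact mul_nonpos_of_nonneg_of_nonpos (hb0 k) (by linarith)
  have hsplit : ∑ i ∈ range k, b i * (s i - l i)
      = ∑ i ∈ range k, b i * s i - ∑ i ∈ range k, b i * l i := by
    rw [← Finset.sum_sub_distrib]; congr 1; ext i; ring
  linarith [hsplit ▸ this]

lemma image_castLE {p k : ℕ} (hkp : k ≤ p) :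
    (Finset.univ.image (Fin.castLE hkp)) = Finset.univ.filter (fun j : Fin p => (j : ℕ) < k) := by
  ext j
  simp only [Finset.mem_image, Finset.mem_univ, true_and, Finset.mem_filter]
  constructor
  · rintro ⟨i, rfl⟩; exact i.isLt
  · intro hj; exact ⟨⟨(j : ℕ), hj⟩, by ext; rfl⟩

lemma sum_fin_lt {p k : ℕ} (hkp : k ≤ p) (f : Fin p → ℝ) :
    ∑ j : Fin p, (if (j : ℕ) < k then f j else 0) = ∑ i : Fin k, f (Fin.castLE hkp i) := by
  rw [← Finset.sum_filter, ← image_castLE hkp,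
    Finset.sum_image (fun a _ b _ h => Fin.castLE_injective hkp h)]

lemma card_filter_lt {p k : ℕ} (hkp : k ≤ p) :
    (Finset.univ.filter (fun j : Fin p => (j : ℕ) < k)).card = k := by
  rw [← image_castLE hkp, Finset.card_image_of_injective _ (Fin.castLE_injective hkp),
    Finset.card_univ, Fintype.card_fin]

lemma wsum_key {p : ℕ} (lam : Fin p → ℝ)
    (hAnti : ∀ j l : Fin p, j ≤ l → lam l ≤ lam j) (hNN : ∀ j, 0 ≤ lam j)
    (w : Fin p → ℝ) (hw0 : ∀ j, 0 ≤ w j) (hw1 : ∀ j, w j ≤ 1)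
    (m : ℕ) (hm : m < p) (hsum : ∑ j, w j = m) :
    ∑ j : Fin p, lam j * w j ≤ ∑ j : Fin p, (if (j : ℕ) < m then lam j else 0) := by
  set jm : Fin p := ⟨m, hm⟩ with hjm
  have key : ∀ j : Fin p, lam j * w j - (if (j : ℕ) < m then lam j else 0) ≤
      lam jm * (w j - (if (j : ℕ) < m then 1 else 0)) := by
    intro j
    by_cases h : (j : ℕ) < m
    · simp only [h, if_pos]
      have h1 : lam jm ≤ lam j := hAnti j jm (by simp [hjm, Fin.le_def, Nat.le_of_lt h])
      nlinarith [hw1 j, hw0 j]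
    · simp only [h, if_neg, if_false]
      have h1 : lam j ≤ lam jm := hAnti jm j (by simp [hjm, Fin.le_def, Nat.le_of_not_lt h])
      nlinarith [hw0 j]
  have hsum2 : ∑ j : Fin p, (if (j : ℕ) < m then (1:ℝ) else 0) = m := by
    rw [← Finset.sum_filter]
    simp [card_filter_lt (le_of_lt hm)]
  calc ∑ j : Fin p, lam j * w j
      = ∑ j : Fin p, (if (j : ℕ) < m then lam j else 0) +
        ∑ j : Fin p, (lam j * w j - (if (j : ℕ) < m then lam j else 0)) := by
        rw [← Finset.sum_add_distrib]; congr 1; ext j; ring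
    _ ≤ ∑ j : Fin p, (if (j : ℕ) < m then lam j else 0) +
        ∑ j : Fin p, lam jm * (w j - (if (j : ℕ) < m then 1 else 0)) := by
        gcongr with j _; exact key j
    _ = ∑ j : Fin p, (if (j : ℕ) < m then lam j else 0) := by
        rw [← Finset.mul_sum, Finset.sum_sub_distrib, hsum, hsum2]
        ring

section
variable {p k : ℕ}

lemma row_sq_le_one (G : Matrix (Fin p) (Fin k) ℝ) (hG : Gᵀ * G = 1) (j : Fin p) :
    ∑ i : Fin k, (G j i)^2 ≤ 1 := by
  set M : Matrix (Fin p) (Fin p) ℝ := 1 - G * Gᵀ with hM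
  have hMsymm : Mᵀ = M := by
    rw [hM, transpose_sub, transpose_one, transpose_mul, transpose_transpose]
  have hMM : M * M = M := by
    rw [hM]
    have h2 : G * Gᵀ * (G * Gᵀ) = G * Gᵀ := by
      rw [Matrix.mul_assoc, ← Matrix.mul_assoc Gᵀ G Gᵀ, hG, Matrix.one_mul]
    rw [sub_mul, mul_sub, mul_sub, Matrix.mul_one, Matrix.one_mul, h2]
    rw [Matrix.mul_one]
    abel
  have hdiag : M j j = ∑ l, (M j l)^2 := by
    conv_lhs => rw [← hMM]
    rw [Matrix.mul_apply]
    congr 1; ext l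
    have : M l j = M j l := by
      conv_lhs => rw [← hMsymm]
      rfl
    rw [this]; ring
  have h0 : 0 ≤ M j j := hdiag ▸ Finset.sum_nonneg (fun l _ => sq_nonneg _)
  have hMjj : M j j = 1 - ∑ i, (G j i)^2 := by
    rw [hM]
    simp [Matrix.sub_apply, Matrix.mul_apply, Matrix.one_apply, sq]
  linarith [hMjj ▸ h0]

lemma kyfan (hkp : k < p) (lam : Fin p → ℝ)
    (hAnti : ∀ j l : Fin p, j ≤ l → lam l ≤ lam j) (hNN : ∀ j, 0 ≤ lam j)
    (G : Matrix (Fin p) (Fin k) ℝ) (hG : Gᵀ * G = 1) (T : Finset (Fin k)) :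
    ∑ i ∈ T, (∑ j : Fin p, lam j * (G j i)^2) ≤
      ∑ j : Fin p, (if (j : ℕ) < T.card then lam j else 0) := by
  set w : Fin p → ℝ := fun j => ∑ i ∈ T, (G j i)^2 with hw
  have hw0 : ∀ j, 0 ≤ w j := fun j => Finset.sum_nonneg (fun i _ => sq_nonneg _)
  have hw1 : ∀ j, w j ≤ 1 := by
    intro j
    refine le_trans ?_ (row_sq_le_one G hG j)
    exact Finset.sum_le_sum_of_subset_of_nonneg (Finset.subset_univ T)
      (fun i _ _ => sq_nonneg _)
  have hcol : ∀ i : Fin k, ∑ j : Fin p, (G j i)^2 = 1 := by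
    intro i
    have : (Gᵀ * G) i i = (1 : Matrix (Fin k) (Fin k) ℝ) i i := by rw [hG]
    simpa [Matrix.mul_apply, Matrix.one_apply, sq] using this
  have hsum : ∑ j, w j = T.card := by
    rw [hw]
    rw [Finset.sum_comm]
    simp [hcol]
  have hm : T.card < p := lt_of_le_of_lt (le_trans (Finset.card_le_univ T) (by simp)) hkp
  have hswap : ∑ i ∈ T, (∑ j : Fin p, lam j * (G j i)^2) = ∑ j : Fin p, lam j * w j := by
    rw [Finset.sum_comm]
    congr 1; ext j
    rw [Finset.mul_sum]
  rw [hswap]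
  exact wsum_key lam hAnti hNN w hw0 hw1 T.card hm hsum
end

lemma rearrange {p k : ℕ} (hkp : k ≤ p) (lam : Fin p → ℝ)
    (s b : Fin k → ℝ) (hb0 : ∀ i, 0 ≤ b i)
    (hky : ∀ T : Finset (Fin k),
      ∑ i ∈ T, s i ≤ ∑ j : Fin p, (if (j : ℕ) < T.card then lam j else 0)) :
    ∃ σ : Equiv.Perm (Fin k),
      ∑ i : Fin k, b i * s i ≤ ∑ i : Fin k, b (σ i) * lam (Fin.castLE hkp i) := by
  classical
  set σ : Equiv.Perm (Fin k) := (Fin.revPerm).trans (Tuple.sort b) with hσ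
  refine ⟨σ, ?_⟩
  have hmono := Tuple.monotone_sort b
  have hanti : ∀ i j : Fin k, i ≤ j → b (σ j) ≤ b (σ i) := by
    intro i j hij
    have : Fin.rev j ≤ Fin.rev i := Fin.rev_le_rev.mpr hij
    exact hmono this
  set bN : ℕ → ℝ := fun i => if h : i < k then b (σ ⟨i, h⟩) else 0 with hbN
  set sN : ℕ → ℝ := fun i => if h : i < k then s (σ ⟨i, h⟩) else 0 with hsN
  set lN : ℕ → ℝ := fun i => if h : i < p then lam ⟨i, h⟩ else 0 with hlN
  have hb0N : ∀ i, 0 ≤ bN i := by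
    intro i; rw [hbN]; dsimp only; split
    · exact hb0 _
    · exact le_refl 0
  have hbmonoN : ∀ i j, i ≤ j → bN j ≤ bN i := by
    intro i j hij
    rw [hbN]; dsimp only
    by_cases hj : j < k
    · have hi : i < k := lt_of_le_of_lt hij hj
      rw [dif_pos hj, dif_pos hi]
      exact hanti ⟨i, hi⟩ ⟨j, hj⟩ hij
    · rw [dif_neg hj]
      split
      · exact hb0 _
      · exact le_refl 0
  have hdom : ∀ m, m ≤ k → ∑ i ∈ range m, sN i ≤ ∑ i ∈ range m, lN i := by
    intro m hm
    have hmp : m ≤ p := le_trans hm hkp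
    set T : Finset (Fin k) := Finset.univ.image (fun i : Fin m => σ (Fin.castLE hm i)) with hT
    have hinj : Function.Injective (fun i : Fin m => σ (Fin.castLE hm i)) :=
      fun a b h => Fin.castLE_injective hm (σ.injective h)
    have hcard : T.card = m := by
      rw [hT, Finset.card_image_of_injective _ hinj, Finset.card_univ, Fintype.card_fin]
    have hL : ∑ i ∈ T, s i = ∑ i ∈ range m, sN i := by
      rw [hT, Finset.sum_image (fun a _ b _ h => hinj h)]
      rw [← Fin.sum_univ_eq_sum_range]
      congr 1; ext i
      rw [hsN]; dsimp only
      rw [dif_pos (lt_of_lt_of_le i.isLt hm)]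
      congr 1
    have hR : ∑ j : Fin p, (if (j : ℕ) < T.card then lam j else 0) = ∑ i ∈ range m, lN i := by
      rw [hcard, sum_fin_lt hmp, ← Fin.sum_univ_eq_sum_range]
      congr 1; ext i
      rw [hlN]; dsimp only
      rw [dif_pos (lt_of_lt_of_le i.isLt hmp)]
      rfl
    calc ∑ i ∈ range m, sN i = ∑ i ∈ T, s i := hL.symm
      _ ≤ _ := hky T
      _ = _ := hR
  have habel := abel_key bN sN lN k hb0N hbmonoN hdom
  have hlhs : ∑ i ∈ range k, bN i * sN i = ∑ i : Fin k, b i * s i := by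
    rw [← Fin.sum_univ_eq_sum_range]
    rw [← Equiv.sum_comp σ (fun i => b i * s i)]
    congr 1; ext i
    rw [hbN, hsN]; dsimp only
    rw [dif_pos i.isLt, dif_pos i.isLt]
  have hrhs : ∑ i ∈ range k, bN i * lN i = ∑ i : Fin k, b (σ i) * lam (Fin.castLE hkp i) := by
    rw [← Fin.sum_univ_eq_sum_range]
    congr 1; ext i
    rw [hbN, hlN]; dsimp only
    rw [dif_pos i.isLt, dif_pos (lt_of_lt_of_le i.isLt hkp)]
    congr 1
  rw [← hlhs, ← hrhs]
  exact habel

lemma sum_fin_ge_const {p k : ℕ} (hkp : k ≤ p) (cst : ℝ) :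
    ∑ j : Fin p, (if k ≤ (j : ℕ) then cst else 0) = ((p : ℝ) - k) * cst := by
  rw [← Finset.sum_filter]
  have h2 : Finset.univ.filter (fun j : Fin p => k ≤ (j : ℕ))
      = Finset.univ \ Finset.univ.filter (fun j : Fin p => (j : ℕ) < k) := by
    ext j; simp [not_lt]
  rw [h2, Finset.sum_const, Finset.card_sdiff_of_subset (Finset.filter_subset _ _), Finset.card_univ,
    Fintype.card_fin, card_filter_lt hkp, nsmul_eq_mul, Nat.cast_sub hkp]

lemma sum_split_lt {p k : ℕ} (f : Fin p → ℝ) :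
    ∑ j : Fin p, f j = (∑ j : Fin p, if (j : ℕ) < k then f j else 0) +
      ∑ j : Fin p, (if k ≤ (j : ℕ) then f j else 0) := by
  rw [← Finset.sum_add_distrib]
  refine Finset.sum_congr rfl (fun j _ => ?_)
  by_cases h : (j : ℕ) < k
  · simp [h, Nat.not_le.mpr h]
  · simp [h, Nat.le_of_not_lt h]

lemma conj_mul_conj {p : ℕ} (Q : Matrix (Fin p) (Fin p) ℝ) (hQ : Qᵀ * Q = 1)
    (a b : Fin p → ℝ) :
    (Q * Matrix.diagonal a * Qᵀ) * (Q * Matrix.diagonal b * Qᵀ)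
      = Q * Matrix.diagonal (fun j => a j * b j) * Qᵀ := by
  rw [Matrix.mul_assoc (Q * Matrix.diagonal a) Qᵀ (Q * Matrix.diagonal b * Qᵀ),
    ← Matrix.mul_assoc Qᵀ (Q * Matrix.diagonal b) Qᵀ,
    ← Matrix.mul_assoc Qᵀ Q (Matrix.diagonal b), hQ, Matrix.one_mul,
    ← Matrix.mul_assoc (Q * Matrix.diagonal a) (Matrix.diagonal b) Qᵀ,
    Matrix.mul_assoc Q (Matrix.diagonal a) (Matrix.diagonal b), Matrix.diagonal_mul_diagonal]

lemma conj_trace {p : ℕ} (Q : Matrix (Fin p) (Fin p) ℝ) (hQ : Qᵀ * Q = 1) (a : Fin p → ℝ) :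
    (Q * Matrix.diagonal a * Qᵀ).trace = ∑ j, a j := by
  rw [Matrix.trace_mul_comm, ← Matrix.mul_assoc, hQ, Matrix.one_mul, Matrix.trace_diagonal]

lemma conj_det {p : ℕ} (Q : Matrix (Fin p) (Fin p) ℝ) (hQ : Qᵀ * Q = 1) (a : Fin p → ℝ) :
    (Q * Matrix.diagonal a * Qᵀ).det = ∏ j, a j := by
  have h1 : Q.det * Qᵀ.det = 1 := by
    rw [← Matrix.det_mul, mul_eq_one_comm.mp hQ, Matrix.det_one]
  rw [Matrix.det_mul, Matrix.det_mul, Matrix.det_diagonal]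
  calc (Q.det * ∏ j, a j) * Qᵀ.det = Q.det * Qᵀ.det * ∏ j, a j := by ring
    _ = ∏ j, a j := by rw [h1, one_mul]

lemma theta_lower_bound {p k : ℕ} (hkp : k < p)
    (lam : Fin p → ℝ)
    (hAnti : ∀ j l : Fin p, j ≤ l → lam l ≤ lam j) (hNN : ∀ j, 0 ≤ lam j)
    (hpos : ∀ i : Fin k, 0 < lam (Fin.castLE hkp.le i))
    (Q : Matrix (Fin p) (Fin p) ℝ) (hQ : Qᵀ * Q = 1)
    (SX : Matrix (Fin p) (Fin p) ℝ) (hSX : SX = Q * Matrix.diagonal lam * Qᵀ)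
    (tauHat : ℝ) (htaupos : 0 < tauHat)
    (hA : ∑ j : Fin p, (if k ≤ (j : ℕ) then lam j else 0) = ((p : ℝ) - k) * tauHat)
    (ΩX : Matrix (Fin p) (Fin p) ℝ) (hΩ : ΩX ∈ ThetaX p k) :
    (∑ i : Fin k, (Real.log (lam (Fin.castLE hkp.le i)) + 1)) +
      ((p : ℝ) - k) * (Real.log tauHat + 1) ≤ gMarg SX ΩX := by
  classical
  obtain ⟨hpd, U, D, τ, hU, hDdiag, hD0, hτ, hinv⟩ := hΩ
  set d : Fin k → ℝ := fun i => D i i with hd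
  have hD : D = Matrix.diagonal d := (hDdiag.diagonal_diag).symm
  have h1d : ∀ i, 0 < 1 + d i := fun i => by have := hD0 i; simp only [hd]; linarith
  set c : Fin k → ℝ := fun i => (1 + d i)⁻¹ with hc
  have hc0 : ∀ i, 0 < c i := fun i => inv_pos.mpr (h1d i)
  set b : Fin k → ℝ := fun i => d i * c i with hb
  have hb0 : ∀ i, 0 ≤ b i := fun i => mul_nonneg (hD0 i) (hc0 i).le
  have hbc : ∀ i, b i = 1 - c i := by
    intro i
    have h := (h1d i).ne'
    show d i * (1 + d i)⁻¹ = 1 - (1 + d i)⁻¹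
    rw [eq_sub_iff_add_eq, ← add_one_mul, add_comm (d i) 1, mul_inv_cancel₀ h]
  set B : Matrix (Fin k) (Fin k) ℝ := Matrix.diagonal b with hB
  -- the inverse of Σ = τ(1 + UDUᵀ) is τ⁻¹(1 − UBUᵀ)
  have hDB : D - B - D * B = 0 := by
    rw [hD, hB, Matrix.diagonal_mul_diagonal]
    ext i j
    rcases eq_or_ne i j with rfl | hne
    · have h := (h1d i).ne'
      simp only [Matrix.sub_apply, Matrix.diagonal_apply_eq, Matrix.zero_apply, hb, hc]
      field_simp
      ring
    · simp [Matrix.sub_apply, Matrix.diagonal_apply_ne _ hne]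
  have hXY : U * D * Uᵀ * (U * B * Uᵀ) = U * (D * B) * Uᵀ := by
    rw [Matrix.mul_assoc (U * D) Uᵀ (U * B * Uᵀ), ← Matrix.mul_assoc Uᵀ (U * B) Uᵀ,
      ← Matrix.mul_assoc Uᵀ U B, hU, Matrix.one_mul, ← Matrix.mul_assoc (U * D) B Uᵀ,
      Matrix.mul_assoc U D B]
  have hexp : (1 + U * D * Uᵀ) * (1 - U * B * Uᵀ) = 1 := by
    have e1 : (1 + U * D * Uᵀ) * (1 - U * B * Uᵀ)
        = 1 + (U * D * Uᵀ - U * B * Uᵀ - U * D * Uᵀ * (U * B * Uᵀ)) := by noncomm_ring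
    rw [e1, hXY]
    have e2 : U * D * Uᵀ - U * B * Uᵀ - U * (D * B) * Uᵀ = U * (D - B - D * B) * Uᵀ := by
      simp only [Matrix.mul_sub, Matrix.sub_mul]
    rw [e2, hDB]
    simp
  have hSig_mul : (τ • (1 + U * D * Uᵀ)) * (τ⁻¹ • (1 - U * B * Uᵀ)) = 1 := by
    rw [Matrix.smul_mul, Matrix.mul_smul, smul_smul, mul_inv_cancel₀ hτ.ne', one_smul, hexp]
  have hΩeq : ΩX = τ⁻¹ • (1 - U * B * Uᵀ) := by
    have h2 : (ΩX⁻¹)⁻¹ = τ⁻¹ • (1 - U * B * Uᵀ) := by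
      rw [hinv]; exact Matrix.inv_eq_right_inv hSig_mul
    rw [← h2, Matrix.nonsing_inv_nonsing_inv _ hpd.det_pos.ne'.isUnit]
  -- determinant
  have hdetSig : (τ • (1 + U * D * Uᵀ)).det = τ ^ p * ∏ i, (1 + d i) := by
    rw [Matrix.det_smul, Fintype.card_fin]
    congr 1
    rw [Matrix.mul_assoc U D Uᵀ, Matrix.det_one_add_mul_comm,
      Matrix.mul_assoc D Uᵀ U, hU, Matrix.mul_one, hD]
    rw [show (1 : Matrix (Fin k) (Fin k) ℝ) = Matrix.diagonal (fun _ => (1:ℝ)) from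
      (Matrix.diagonal_one).symm, Matrix.diagonal_add, Matrix.det_diagonal]
  have hprodpos : 0 < ∏ i, (1 + d i) := Finset.prod_pos (fun i _ => h1d i)
  have hdetΩ : ΩX.det = (τ ^ p * ∏ i, (1 + d i))⁻¹ := by
    have h3 : (τ • (1 + U * D * Uᵀ)).det * ΩX.det = 1 := by
      rw [← Matrix.det_mul, hΩeq, hSig_mul, Matrix.det_one]
    rw [← hdetSig]
    exact eq_inv_of_mul_eq_one_right h3
  have hτp : (0:ℝ) < τ ^ p := pow_pos hτ p
  have hlogdet : Real.log ΩX.det = -((p : ℝ) * Real.log τ + ∑ i, Real.log (1 + d i)) := by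
    rw [hdetΩ, Real.log_inv, Real.log_mul hτp.ne' hprodpos.ne', Real.log_pow,
      Real.log_prod (fun i _ => (h1d i).ne')]
  -- trace
  have hQQ : Q * Qᵀ = 1 := mul_eq_one_comm.mp hQ
  set G : Matrix (Fin p) (Fin k) ℝ := Qᵀ * U with hGdef
  have hG : Gᵀ * G = 1 := by
    rw [hGdef, Matrix.transpose_mul, Matrix.transpose_transpose,
      Matrix.mul_assoc Uᵀ Q (Qᵀ * U), ← Matrix.mul_assoc Q Qᵀ U, hQQ, Matrix.one_mul, hU]
  set s : Fin k → ℝ := fun i => ∑ j, lam j * (G j i)^2 with hs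
  have htrS : SX.trace = ∑ j, lam j := by
    rw [hSX, Matrix.trace_mul_comm, ← Matrix.mul_assoc, hQ, Matrix.one_mul,
      Matrix.trace_diagonal]
  have e3 : ∀ i, (Gᵀ * Matrix.diagonal lam * G) i i = s i := by
    intro i
    rw [Matrix.mul_apply, hs]
    dsimp only
    refine Finset.sum_congr rfl (fun j _ => ?_)
    rw [Matrix.mul_diagonal, Matrix.transpose_apply]
    ring
  have htr2 : (SX * (U * B * Uᵀ)).trace = ∑ i, s i * b i := by
    have e1 : SX * (U * B * Uᵀ) = (Q * Matrix.diagonal lam * Qᵀ * U * B) * Uᵀ := by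
      rw [hSX]; simp only [Matrix.mul_assoc]
    rw [e1, Matrix.trace_mul_comm]
    have e2 : Uᵀ * (Q * Matrix.diagonal lam * Qᵀ * U * B) = (Gᵀ * Matrix.diagonal lam * G) * B := by
      rw [hGdef, Matrix.transpose_mul, Matrix.transpose_transpose]
      simp only [Matrix.mul_assoc]
    rw [e2, hB, Matrix.trace]
    refine Finset.sum_congr rfl (fun i _ => ?_)
    show ((Gᵀ * Matrix.diagonal lam * G) * Matrix.diagonal b) i i = s i * b i
    rw [Matrix.mul_diagonal, e3 i]
  have htrace : (SX * ΩX).trace = τ⁻¹ * ((∑ j, lam j) - ∑ i, b i * s i) := by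
    rw [hΩeq, Matrix.mul_smul, Matrix.trace_smul, Matrix.mul_sub, Matrix.mul_one,
      Matrix.trace_sub, htrS, htr2, smul_eq_mul]
    have : ∑ i, s i * b i = ∑ i, b i * s i := by
      refine Finset.sum_congr rfl (fun i _ => ?_); ring
    rw [this]
  -- apply Ky Fan and rearrangement
  have hky := kyfan hkp lam hAnti hNN G hG
  obtain ⟨σ, hσ⟩ := rearrange hkp.le lam s b hb0 hky
  set lam' : Fin k → ℝ := fun i => lam (Fin.castLE hkp.le i) with hlam'
  have hsplit : ∑ j, lam j = (∑ i : Fin k, lam' i) + ((p:ℝ) - k) * tauHat := by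
    rw [← hA, ← sum_fin_lt hkp.le lam, ← Finset.sum_add_distrib]
    refine Finset.sum_congr rfl (fun j _ => ?_)
    by_cases h : (j : ℕ) < k
    · simp [h, Nat.not_le.mpr h]
    · simp [h, Nat.le_of_not_lt h]
  have hgex : gMarg SX ΩX = (p:ℝ) * Real.log τ + (∑ i, Real.log (1 + d i)) +
      τ⁻¹ * ((∑ j, lam j) - ∑ i, b i * s i) := by
    rw [gMarg, hlogdet, htrace]; ring
  have hτinv : (0:ℝ) < τ⁻¹ := inv_pos.mpr hτ
  have step1 : (p:ℝ) * Real.log τ + (∑ i, Real.log (1 + d i)) +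
      τ⁻¹ * ((∑ j, lam j) - ∑ i : Fin k, b (σ i) * lam' i) ≤ gMarg SX ΩX := by
    rw [hgex]
    have h1 := mul_le_mul_of_nonneg_left (sub_le_sub_left hσ (∑ j, lam j)) hτinv.le
    linarith
  have hsum_comp : ∑ i, Real.log (1 + d i) = ∑ i, Real.log (1 + d (σ i)) :=
    (Equiv.sum_comp σ (fun i => Real.log (1 + d i))).symm
  have hterm : ∀ i : Fin k, Real.log (τ * (1 + d (σ i))) + lam' i / (τ * (1 + d (σ i)))
      = Real.log τ + Real.log (1 + d (σ i)) + τ⁻¹ * (lam' i - b (σ i) * lam' i) := by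
    intro i
    rw [Real.log_mul hτ.ne' (h1d (σ i)).ne', hbc (σ i)]
    have h := (h1d (σ i)).ne'
    show _ = Real.log τ + Real.log (1 + d (σ i)) + τ⁻¹ * (lam' i - (1 - (1 + d (σ i))⁻¹) * lam' i)
    field_simp
    ring
  have expand : ∑ i : Fin k, (Real.log (τ * (1 + d (σ i))) + lam' i / (τ * (1 + d (σ i))))
      = (k:ℝ) * Real.log τ + (∑ i, Real.log (1 + d (σ i))) +
        τ⁻¹ * ((∑ i, lam' i) - ∑ i, b (σ i) * lam' i) := by
    rw [Finset.sum_congr rfl (fun i _ => hterm i), Finset.sum_add_distrib,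
      Finset.sum_add_distrib, Finset.sum_const, Finset.card_univ, Fintype.card_fin,
      nsmul_eq_mul, ← Finset.mul_sum, Finset.sum_sub_distrib]
  have hEeq : (p:ℝ) * Real.log τ + (∑ i, Real.log (1 + d i)) +
      τ⁻¹ * ((∑ j, lam j) - ∑ i : Fin k, b (σ i) * lam' i)
      = (∑ i : Fin k, (Real.log (τ * (1 + d (σ i))) + lam' i / (τ * (1 + d (σ i)))))
        + ((p:ℝ) - k) * (Real.log τ + tauHat / τ) := by
    rw [expand, hsum_comp, hsplit]
    ring
  have hfinal1 : ∀ i : Fin k, Real.log (lam' i) + 1 ≤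
      Real.log (τ * (1 + d (σ i))) + lam' i / (τ * (1 + d (σ i))) := by
    intro i
    exact log_key (hpos i) (mul_pos hτ (h1d (σ i)))
  have hfinal2 : ((p:ℝ) - k) * (Real.log tauHat + 1) ≤ ((p:ℝ) - k) * (Real.log τ + tauHat / τ) := by
    have hpk : (0:ℝ) ≤ (p:ℝ) - k := by
      have : (k:ℝ) ≤ (p:ℝ) := Nat.cast_le.mpr hkp.le
      linarith
    exact mul_le_mul_of_nonneg_left (log_key htaupos hτ) hpk
  calc (∑ i : Fin k, (Real.log (lam' i) + 1)) + ((p : ℝ) - k) * (Real.log tauHat + 1)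
      ≤ (∑ i : Fin k, (Real.log (τ * (1 + d (σ i))) + lam' i / (τ * (1 + d (σ i)))))
        + ((p:ℝ) - k) * (Real.log τ + tauHat / τ) :=
        add_le_add (Finset.sum_le_sum (fun i _ => hfinal1 i)) hfinal2
    _ = _ := hEeq.symm
    _ ≤ gMarg SX ΩX := step1

end Helpers

/-- Tipping–Bishop step: if `S_X` is symmetric positive semi-definite with rank greater
than `k`, eigenvalues `λ 0 ≥ ⋯ ≥ λ (p−1) ≥ 0` and orthonormal eigenvectors `v j`, then
`g_{n,2}` is minimized over Θ_X at `Ω̂_X = Σ̂_X⁻¹`, where `Σ̂_X` has eigenvectors `v j`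
with eigenvalues `λ 0, …, λ (k−1), τ̂, …, τ̂` and `τ̂ = Σ_{j≥k} λ j/(p − k)`; in
particular `g_{n,2}(Ω_X) ≥ Σ_{j<k}(log λ j + 1) + (p − k)(log τ̂ + 1)` for all
`Ω_X ∈ Θ_X`. -/
theorem gMarg_min_spiked (p k : ℕ) (hk : 0 < k) (hkp : k ≤ p)
    (SX : Matrix (Fin p) (Fin p) ℝ) (hsymm : SX.IsSymm) (hpsd : SX.PosSemidef)
    (hrank : k < SX.rank)
    (lam : Fin p → ℝ) (v : Fin p → Fin p → ℝ)
    (hEig : ∀ j, SX *ᵥ v j = lam j • v j)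
    (hOrth : ∀ j l, v j ⬝ᵥ v l = if j = l then (1 : ℝ) else 0)
    (hAnti : ∀ j l : Fin p, j ≤ l → lam l ≤ lam j) (hNN : ∀ j, 0 ≤ lam j)
    (tauHat : ℝ) (htau : tauHat = (∑ j : Fin p, if k ≤ (j : ℕ) then lam j else 0) / (p - k))
    (SigHat : Matrix (Fin p) (Fin p) ℝ)
    (hSig : SigHat = ∑ j : Fin p,
      (if (j : ℕ) < k then lam j else tauHat) • Matrix.vecMulVec (v j) (v j)) :
    SigHat⁻¹ ∈ ThetaX p k ∧
    (∀ ΩX ∈ ThetaX p k, gMarg SX SigHat⁻¹ ≤ gMarg SX ΩX) ∧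
    gMarg SX SigHat⁻¹ =
      (∑ j : Fin k, (Real.log (lam (Fin.castLE hkp j)) + 1)) +
        (p - k) * (Real.log tauHat + 1) := by
  classical
  -- the orthogonal matrix with columns v j
  set Q : Matrix (Fin p) (Fin p) ℝ := Matrix.of (fun i j => v j i) with hQdef
  have hQ : Qᵀ * Q = 1 := by
    ext j l
    rw [Matrix.mul_apply, Matrix.one_apply]
    have h := hOrth j l
    rw [dotProduct] at h
    simpa [hQdef] using h
  have hQQ : Q * Qᵀ = 1 := mul_eq_one_comm.mp hQ
  have hSXQ : SX * Q = Q * Matrix.diagonal lam := by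
    ext i j
    have h := congrFun (hEig j) i
    simp only [Matrix.mulVec, dotProduct, Pi.smul_apply, smul_eq_mul] at h
    rw [Matrix.mul_apply, Matrix.mul_diagonal]
    simp only [hQdef, Matrix.of_apply]
    rw [h]; ring
  have hSX : SX = Q * Matrix.diagonal lam * Qᵀ := by
    calc SX = SX * (Q * Qᵀ) := by rw [hQQ, Matrix.mul_one]
      _ = (SX * Q) * Qᵀ := by rw [Matrix.mul_assoc]
      _ = Q * Matrix.diagonal lam * Qᵀ := by rw [hSXQ]
  -- rank facts
  have hkp' : k < p :=
    lt_of_lt_of_le hrank (le_trans (Matrix.rank_le_card_width SX) (by simp))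
  have hQu : IsUnit Q.det :=
    IsUnit.of_mul_eq_one _ (by rw [← Matrix.det_mul, hQQ, Matrix.det_one])
  have hQtu : IsUnit Qᵀ.det := by rw [Matrix.det_transpose]; exact hQu
  have hrankdiag : SX.rank = (Matrix.diagonal lam).rank := by
    rw [hSX, Matrix.rank_mul_eq_left_of_isUnit_det Qᵀ (Q * Matrix.diagonal lam) hQtu,
      Matrix.rank_mul_eq_right_of_isUnit_det Q (Matrix.diagonal lam) hQu]
  have hcard : k < Fintype.card {j // lam j ≠ 0} := by
    rw [← Matrix.rank_diagonal lam, ← hrankdiag]; exact hrank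
  have hexists : ∃ j : Fin p, k ≤ (j : ℕ) ∧ 0 < lam j := by
    by_contra hcon
    push_neg at hcon
    have hsub : Finset.univ.filter (fun j : Fin p => lam j ≠ 0) ⊆
        Finset.univ.filter (fun j : Fin p => (j : ℕ) < k) := by
      intro j hj
      simp only [Finset.mem_filter, Finset.mem_univ, true_and] at hj ⊢
      by_contra hlt
      exact hj (le_antisymm (hcon j (Nat.le_of_not_lt hlt)) (hNN j))
    have h1 : Fintype.card {j // lam j ≠ 0} ≤ k := by
      rw [Fintype.card_subtype]
      exact le_trans (Finset.card_le_card hsub) (le_of_eq (card_filter_lt hkp))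
    exact (not_lt.mpr h1) hcard
  obtain ⟨jst, hjk, hjpos⟩ := hexists
  have hposk : ∀ i : Fin k, 0 < lam (Fin.castLE hkp i) := by
    intro i
    refine lt_of_lt_of_le hjpos (hAnti (Fin.castLE hkp i) jst ?_)
    rw [Fin.le_def]
    simp only [Fin.coe_castLE]
    omega
  have hApos : 0 < ∑ j : Fin p, (if k ≤ (j : ℕ) then lam j else 0) := by
    refine Finset.sum_pos' (fun j _ => ?_) ⟨jst, Finset.mem_univ _, ?_⟩
    · split
      · exact hNN j
      · exact le_refl 0
    · rw [if_pos hjk]; exact hjpos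
  have hpkR : (0 : ℝ) < (p : ℝ) - k := sub_pos.mpr (Nat.cast_lt.mpr hkp')
  have htaupos : 0 < tauHat := by rw [htau]; exact div_pos hApos hpkR
  have hA : ∑ j : Fin p, (if k ≤ (j : ℕ) then lam j else 0) = ((p : ℝ) - k) * tauHat := by
    rw [htau, mul_comm, div_mul_cancel₀ _ hpkR.ne']
  have htle : tauHat ≤ lam ⟨k, hkp'⟩ := by
    have hsum_le : ∑ j : Fin p, (if k ≤ (j : ℕ) then lam j else 0) ≤
        ∑ j : Fin p, (if k ≤ (j : ℕ) then lam ⟨k, hkp'⟩ else 0) := by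
      refine Finset.sum_le_sum (fun j _ => ?_)
      by_cases h : k ≤ (j : ℕ)
      · rw [if_pos h, if_pos h]
        exact hAnti ⟨k, hkp'⟩ j h
      · rw [if_neg h, if_neg h]
    rw [sum_fin_ge_const hkp (lam ⟨k, hkp'⟩), hA] at hsum_le
    exact (mul_le_mul_iff_right₀ hpkR).mp hsum_le
  -- the spectral form of SigHat
  set mu : Fin p → ℝ := fun j => if (j : ℕ) < k then lam j else tauHat with hmu
  have hmupos : ∀ j, 0 < mu j := by
    intro j
    rw [hmu]
    dsimp only
    split
    · rename_i h
      have : lam (Fin.castLE hkp ⟨(j : ℕ), h⟩) = lam j := rfl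
      exact this ▸ hposk ⟨(j : ℕ), h⟩
    · exact htaupos
  have hSigQ : SigHat = Q * Matrix.diagonal mu * Qᵀ := by
    rw [hSig]
    ext a b
    rw [Matrix.sum_apply]
    rw [show (Q * Matrix.diagonal mu * Qᵀ) a b = ∑ j, Q a j * mu j * Q b j by
      rw [Matrix.mul_apply]
      refine Finset.sum_congr rfl (fun j _ => ?_)
      rw [Matrix.mul_diagonal, Matrix.transpose_apply]]
    refine Finset.sum_congr rfl (fun j _ => ?_)
    simp only [Matrix.smul_apply, Matrix.vecMulVec_apply, smul_eq_mul, hQdef, Matrix.of_apply,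
      hmu]
    ring
  have hSigmul : SigHat * (Q * Matrix.diagonal (fun j => (mu j)⁻¹) * Qᵀ) = 1 := by
    rw [hSigQ, conj_mul_conj Q hQ]
    have : (fun j => mu j * (mu j)⁻¹) = fun _ => (1:ℝ) := by
      funext j; exact mul_inv_cancel₀ (hmupos j).ne'
    rw [this, Matrix.diagonal_one, Matrix.mul_one, hQQ]
  have hSigInv : SigHat⁻¹ = Q * Matrix.diagonal (fun j => (mu j)⁻¹) * Qᵀ :=
    Matrix.inv_eq_right_inv hSigmul
  have hSigUnit : IsUnit SigHat.det := Matrix.isUnit_det_of_right_inverse hSigmul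
  have hlamposlt : ∀ j : Fin p, (j : ℕ) < k → 0 < lam j := by
    intro j h
    have h2 := hmupos j
    simp only [hmu] at h2
    rwa [if_pos h] at h2
  -- value of the objective at SigHat⁻¹
  have hdetInv : SigHat⁻¹.det = ∏ j, (mu j)⁻¹ := by rw [hSigInv, conj_det Q hQ]
  have hlogdetInv : Real.log (SigHat⁻¹.det) = -∑ j, Real.log (mu j) := by
    rw [hdetInv, Real.log_prod (fun j _ => (inv_pos.mpr (hmupos j)).ne')]
    rw [← Finset.sum_neg_distrib]
    exact Finset.sum_congr rfl (fun j _ => Real.log_inv _)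
  have htrInv : (SX * SigHat⁻¹).trace = (p : ℝ) := by
    rw [hSX, hSigInv, conj_mul_conj Q hQ, conj_trace Q hQ]
    have h1 : ∑ j : Fin p, (if (j : ℕ) < k then lam j * (mu j)⁻¹ else 0) = (k : ℝ) := by
      have e : ∀ j : Fin p, (if (j : ℕ) < k then lam j * (mu j)⁻¹ else 0)
          = if (j : ℕ) < k then (1 : ℝ) else 0 := by
        intro j
        by_cases h : (j : ℕ) < k
        · rw [if_pos h, if_pos h,
            show mu j = lam j from by simp only [hmu]; exact if_pos h]
          exact mul_inv_cancel₀ (hlamposlt j h).ne'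
        · rw [if_neg h, if_neg h]
      rw [Finset.sum_congr rfl (fun j _ => e j), ← Finset.sum_filter, Finset.sum_const,
        card_filter_lt hkp, nsmul_eq_mul, mul_one]
    have h2 : ∑ j : Fin p, (if k ≤ (j : ℕ) then lam j * (mu j)⁻¹ else 0) = (p : ℝ) - k := by
      have e : ∀ j : Fin p, (if k ≤ (j : ℕ) then lam j * (mu j)⁻¹ else 0)
          = (if k ≤ (j : ℕ) then lam j else 0) * tauHat⁻¹ := by
        intro j
        by_cases h : k ≤ (j : ℕ)
        · rw [if_pos h, if_pos h,
            show mu j = tauHat from by simp only [hmu]; exact if_neg (Nat.not_lt.mpr h)]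
        · rw [if_neg h, if_neg h, zero_mul]
      rw [Finset.sum_congr rfl (fun j _ => e j), ← Finset.sum_mul, hA, mul_assoc,
        mul_inv_cancel₀ htaupos.ne', mul_one]
    rw [sum_split_lt (k := k) (fun j => lam j * (mu j)⁻¹), h1, h2]
    ring
  have hlogmusum : ∑ j, Real.log (mu j) =
      (∑ i : Fin k, Real.log (lam (Fin.castLE hkp i))) + ((p : ℝ) - k) * Real.log tauHat := by
    rw [sum_split_lt (k := k) (fun j => Real.log (mu j))]
    congr 1
    · rw [← sum_fin_lt hkp (fun j => Real.log (lam j))]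
      refine Finset.sum_congr rfl (fun j _ => ?_)
      by_cases h : (j : ℕ) < k
      · rw [if_pos h, if_pos h, show mu j = lam j from by simp only [hmu]; exact if_pos h]
      · rw [if_neg h, if_neg h]
    · rw [← sum_fin_ge_const hkp (Real.log tauHat)]
      refine Finset.sum_congr rfl (fun j _ => ?_)
      by_cases h : k ≤ (j : ℕ)
      · rw [if_pos h, if_pos h,
          show mu j = tauHat from by simp only [hmu]; exact if_neg (Nat.not_lt.mpr h)]
      · rw [if_neg h, if_neg h]
  have hval : gMarg SX SigHat⁻¹ =
      (∑ i : Fin k, (Real.log (lam (Fin.castLE hkp i)) + 1)) +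
        ((p : ℝ) - k) * (Real.log tauHat + 1) := by
    rw [gMarg, hlogdetInv, htrInv, hlogmusum, Finset.sum_add_distrib, Finset.sum_const,
      Finset.card_univ, Fintype.card_fin, nsmul_eq_mul, mul_one]
    push_cast
    ring
  -- membership of SigHat⁻¹ in ThetaX
  set U : Matrix (Fin p) (Fin k) ℝ := Matrix.of (fun i i' => v (Fin.castLE hkp i') i) with hUdef
  set Dm : Matrix (Fin k) (Fin k) ℝ :=
    Matrix.diagonal (fun i => lam (Fin.castLE hkp i) / tauHat - 1) with hDdef
  have hUU : Uᵀ * U = 1 := by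
    ext a b
    rw [Matrix.mul_apply, Matrix.one_apply]
    have h := hOrth (Fin.castLE hkp a) (Fin.castLE hkp b)
    rw [dotProduct] at h
    simp only [Matrix.transpose_apply, hUdef, Matrix.of_apply]
    rw [h]
    by_cases hab : a = b
    · rw [if_pos hab, if_pos (hab ▸ rfl)]
    · rw [if_neg hab, if_neg (fun hc => hab (Fin.castLE_injective hkp hc))]
  have hD0' : ∀ i, 0 ≤ Dm i i := by
    intro i
    rw [hDdef, Matrix.diagonal_apply_eq]
    have hge : tauHat ≤ lam (Fin.castLE hkp i) := by
      refine le_trans htle (hAnti (Fin.castLE hkp i) ⟨k, hkp'⟩ ?_)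
      rw [Fin.le_def]
      simp only [Fin.coe_castLE]
      exact Nat.le_of_lt i.isLt
    exact sub_nonneg.mpr ((one_le_div htaupos).mpr hge)
  have hUDUapp : ∀ a b, (U * Dm * Uᵀ) a b =
      ∑ j : Fin p, (if (j : ℕ) < k then (lam j / tauHat - 1) * (v j a * v j b) else 0) := by
    intro a b
    have e1 : (U * Dm * Uᵀ) a b =
        ∑ i : Fin k, U a i * (lam (Fin.castLE hkp i) / tauHat - 1) * U b i := by
      rw [Matrix.mul_apply]
      refine Finset.sum_congr rfl (fun i _ => ?_)
      rw [hDdef, Matrix.mul_diagonal, Matrix.transpose_apply]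
    rw [e1, sum_fin_lt hkp (fun j => (lam j / tauHat - 1) * (v j a * v j b))]
    refine Finset.sum_congr rfl (fun i _ => ?_)
    simp only [hUdef, Matrix.of_apply]
    ring
  have hUDU : SigHat = tauHat • (1 + U * Dm * Uᵀ) := by
    ext a b
    have hone : (1 : Matrix (Fin p) (Fin p) ℝ) a b = ∑ j, v j a * v j b := by
      rw [← hQQ, Matrix.mul_apply]
      exact Finset.sum_congr rfl (fun j _ => by simp [hQdef, Matrix.transpose_apply])
    rw [hSig, Matrix.sum_apply, Matrix.smul_apply, Matrix.add_apply, hUDUapp a b, hone,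
      smul_eq_mul, mul_add, Finset.mul_sum, Finset.mul_sum, ← Finset.sum_add_distrib]
    refine Finset.sum_congr rfl (fun j _ => ?_)
    simp only [Matrix.smul_apply, Matrix.vecMulVec_apply, smul_eq_mul]
    by_cases h : (j : ℕ) < k
    · rw [if_pos h, if_pos h]
      field_simp
      ring
    · rw [if_neg h, if_neg h]
      ring
  have hPD : SigHat.PosDef := by
    refine Matrix.posDef_iff_dotProduct_mulVec.mpr ⟨?_, ?_⟩
    · rw [Matrix.IsHermitian, Matrix.conjTranspose_eq_transpose_of_trivial, hSigQ,
        Matrix.transpose_mul, Matrix.transpose_mul, Matrix.transpose_transpose,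
        Matrix.diagonal_transpose, Matrix.mul_assoc]
    · intro x hx
      set y : Fin p → ℝ := Qᵀ *ᵥ x with hydef
      have hyne : y ≠ 0 := by
        intro h0
        apply hx
        have : Q *ᵥ y = x := by rw [hydef, Matrix.mulVec_mulVec, hQQ, Matrix.one_mulVec]
        rw [← this, h0, Matrix.mulVec_zero]
      have hquad : dotProduct (star x) (SigHat *ᵥ x) = ∑ j, mu j * (y j)^2 := by
        have hstar : star x = x := by funext i; simp
        rw [hstar, hSigQ, show Q * Matrix.diagonal mu * Qᵀ = Q * (Matrix.diagonal mu * Qᵀ)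
          from Matrix.mul_assoc _ _ _, ← Matrix.mulVec_mulVec, Matrix.dotProduct_mulVec,
          ← Matrix.mulVec_transpose, ← Matrix.mulVec_mulVec, ← hydef]
        rw [dotProduct]
        refine Finset.sum_congr rfl (fun j _ => ?_)
        rw [Matrix.mulVec_diagonal]
        ring
      rw [hquad]
      obtain ⟨j0, hj0⟩ := Function.ne_iff.mp hyne
      have hj0' : y j0 ≠ 0 := by simpa using hj0
      refine Finset.sum_pos' (fun j _ => mul_nonneg (hmupos j).le (sq_nonneg _))
        ⟨j0, Finset.mem_univ _, mul_pos (hmupos j0)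
          (lt_of_le_of_ne (sq_nonneg _) (Ne.symm (pow_ne_zero 2 hj0')))⟩
  have hmember : SigHat⁻¹ ∈ ThetaX p k := by
    refine ⟨hPD.inv, U, Dm, tauHat, hUU, hDdef ▸ Matrix.isDiag_diagonal _, hD0', htaupos, ?_⟩
    rw [Matrix.nonsing_inv_nonsing_inv _ hSigUnit]
    exact hUDU
  refine ⟨hmember, ?_, hval⟩
  intro ΩX hΩ
  rw [hval]
  exact theta_lower_bound hkp' lam hAnti hNN hposk Q hQ SX hSX tauHat htaupos hA ΩX hΩ

end
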